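/- If p ≥ 2, there is a constant c = c(k,p) such that for all z, η ∈ ℝ^k: |V_p(z - η)| ≤ c |V_p(z) - V_p(η)|. -/

import Mathlib

open Real

noncomputable def V (p : ℝ) {k : ℕ} (z : EuclideanSpace ℝ (Fin k)) :
    EuclideanSpace ℝ (Fin k) :=
  ((1 + ‖z‖ ^ 2) ^ ((p - 2) / 4)) • z

lemma arith_key (a b s d ha hb t E : ℝ) (hb0 : 0 ≤ b) (hba : b ≤ a)
    (ha1 : 1 ≤ ha) (hb1 : 1 ≤ hb) (hab : hb ≤ ha) (ht : 1 ≤ t)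
    (hs : s ≤ a * b) (hd2 : d ^ 2 = a ^ 2 - 2 * s + b ^ 2)
    (hcomp : a ^ 2 ≤ 2 * b ^ 2 → ha ≤ t * hb)
    (hE : E = ha * a ^ 2 - (ha + hb) * s + hb * b ^ 2) :
    ha * d ^ 2 ≤ 8 * t * E := by
  have ha0 : (0:ℝ) ≤ a := le_trans hb0 hba
  have has : s ≤ a ^ 2 := by nlinarith
  rcases le_or_gt (b ^ 2) s with hcase | hcase
  · have h1 : ha * d ^ 2 ≤ E := by
      rw [hE, hd2]
      nlinarith [mul_nonneg (sub_nonneg.mpr hab) (sub_nonneg.mpr hcase)]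
    have hE0 : 0 ≤ E := le_trans (by positivity) h1
    nlinarith
  · rcases le_or_gt (2 * b ^ 2) (a ^ 2) with hcase2 | hcase2
    · have hEge : ha * (a ^ 2 - s) ≤ E := by
        rw [hE]
        nlinarith [mul_nonneg (by positivity : (0:ℝ) ≤ hb) (le_of_lt (sub_pos.mpr hcase))]
      have hd2le : d ^ 2 ≤ 8 * (a ^ 2 - s) := by nlinarith
      have hE0 : 0 ≤ E := le_trans (by nlinarith) hEge
      nlinarith [mul_le_mul_of_nonneg_left hd2le (by positivity : (0:ℝ) ≤ ha)]
    · have hEge : hb * d ^ 2 ≤ E := by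
        rw [hE, hd2]
        nlinarith [mul_nonneg (sub_nonneg.mpr hab) (sub_nonneg.mpr has)]
      have hE0 : 0 ≤ E := le_trans (by positivity) hEge
      have hcomp' := hcomp (le_of_lt hcase2)
      nlinarith [mul_le_mul_of_nonneg_right hcomp' (sq_nonneg d),
        mul_le_mul_of_nonneg_left hEge (by linarith : (0:ℝ) ≤ t)]

lemma key_ineq {k : ℕ} (α : ℝ) (hα : 0 ≤ α) (z η : EuclideanSpace ℝ (Fin k))
    (hba : ‖η‖ ≤ ‖z‖) :
    ‖((1 + ‖z - η‖ ^ 2) ^ α) • (z - η)‖ ≤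
      (8 * 8 ^ α) * ‖((1 + ‖z‖ ^ 2) ^ α) • z - ((1 + ‖η‖ ^ 2) ^ α) • η‖ := by
  set a := ‖z‖ with ha_def
  set b := ‖η‖ with hb_def
  set d := ‖z - η‖ with hd_def
  set s : ℝ := inner ℝ z η with hs_def
  have ha0 : 0 ≤ a := norm_nonneg _
  have hb0 : 0 ≤ b := norm_nonneg _
  have hd0 : 0 ≤ d := norm_nonneg _
  set ha : ℝ := (1 + a ^ 2) ^ α with hha
  set hb : ℝ := (1 + b ^ 2) ^ α with hhb
  have h1a : (0:ℝ) < 1 + a ^ 2 := by positivity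
  have h1b : (0:ℝ) < 1 + b ^ 2 := by positivity
  have ha1 : 1 ≤ ha := by
    rw [hha]
    calc (1:ℝ) = 1 ^ α := (Real.one_rpow α).symm
    _ ≤ (1 + a ^ 2) ^ α := Real.rpow_le_rpow (by norm_num) (by nlinarith) hα
  have hb1 : 1 ≤ hb := by
    rw [hhb]
    calc (1:ℝ) = 1 ^ α := (Real.one_rpow α).symm
    _ ≤ (1 + b ^ 2) ^ α := Real.rpow_le_rpow (by norm_num) (by nlinarith) hα
  have hab : hb ≤ ha := Real.rpow_le_rpow (le_of_lt h1b) (by nlinarith) hα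
  have hs_le : s ≤ a * b := real_inner_le_norm z η
  have hd2 : d ^ 2 = a ^ 2 - 2 * s + b ^ 2 := by
    rw [hd_def, ha_def, hb_def, hs_def]
    exact norm_sub_sq_real z η
  have hd_le : d ≤ 2 * a := by
    calc d ≤ a + b := norm_sub_le z η
    _ ≤ 2 * a := by linarith
  have hcz : (inner ℝ η z : ℝ) = s := by rw [hs_def, real_inner_comm]
  have hE : (inner ℝ (((1 + a ^ 2) ^ α) • z - ((1 + b ^ 2) ^ α) • η) (z - η) : ℝ)
      = ha * a ^ 2 - (ha + hb) * s + hb * b ^ 2 := by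
    rw [inner_sub_left, inner_sub_right, inner_sub_right,
      real_inner_smul_left, real_inner_smul_left, real_inner_smul_left, real_inner_smul_left,
      real_inner_self_eq_norm_sq, real_inner_self_eq_norm_sq, hcz]
    rw [← hs_def, ← ha_def, ← hb_def, ← hha, ← hhb]
    ring
  set E : ℝ := inner ℝ (((1 + a ^ 2) ^ α) • z - ((1 + b ^ 2) ^ α) • η) (z - η) with hE_def
  have h2α : (0:ℝ) < 2 ^ α := Real.rpow_pos_of_pos (by norm_num) α
  have h2α1 : (1:ℝ) ≤ 2 ^ α := Real.one_le_rpow (by norm_num) hα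
  have hcomp : a ^ 2 ≤ 2 * b ^ 2 → ha ≤ 2 ^ α * hb := by
    intro h
    rw [hha, hhb, ← Real.mul_rpow (by norm_num) (le_of_lt h1b)]
    exact Real.rpow_le_rpow (le_of_lt h1a) (by nlinarith) hα
  have hkey : ha * d ^ 2 ≤ 8 * 2 ^ α * E :=
    arith_key a b s d ha hb (2 ^ α) E hb0 hba ha1 hb1 hab h2α1 hs_le hd2 hcomp hE
  have hLHS : ‖((1 + d ^ 2) ^ α) • (z - η)‖ = (1 + d ^ 2) ^ α * d := by
    rw [norm_smul, Real.norm_eq_abs,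
      abs_of_pos (Real.rpow_pos_of_pos (by positivity) α), ← hd_def]
  rw [hLHS]
  have hW0 : (0:ℝ) ≤ ‖((1 + a ^ 2) ^ α) • z - ((1 + b ^ 2) ^ α) • η‖ := norm_nonneg _
  rcases eq_or_lt_of_le hd0 with hdz | hdpos
  · rw [← hdz, mul_zero]
    positivity
  · have hCS : E ≤ ‖((1 + a ^ 2) ^ α) • z - ((1 + b ^ 2) ^ α) • η‖ * d := by
      rw [hE_def, hd_def]
      exact real_inner_le_norm _ _
    set W := ‖((1 + a ^ 2) ^ α) • z - ((1 + b ^ 2) ^ α) • η‖ with hWdef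
    have hstep : ha * d ≤ 8 * 2 ^ α * W := by
      apply le_of_mul_le_mul_right _ hdpos
      calc ha * d * d = ha * d ^ 2 := by ring
      _ ≤ 8 * 2 ^ α * E := hkey
      _ ≤ 8 * 2 ^ α * (W * d) := by
          apply mul_le_mul_of_nonneg_left hCS (by positivity)
      _ = 8 * 2 ^ α * W * d := by ring
    have h4α : (0:ℝ) ≤ 4 ^ α := le_of_lt (Real.rpow_pos_of_pos (by norm_num) α)
    have hfac : (1 + d ^ 2) ^ α ≤ 4 ^ α * ha := by
      rw [hha, ← Real.mul_rpow (by norm_num) (le_of_lt h1a)]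
      exact Real.rpow_le_rpow (by positivity) (by nlinarith) hα
    calc (1 + d ^ 2) ^ α * d ≤ (4 ^ α * ha) * d :=
          mul_le_mul_of_nonneg_right hfac (le_of_lt hdpos)
    _ = 4 ^ α * (ha * d) := by ring
    _ ≤ 4 ^ α * (8 * 2 ^ α * W) := mul_le_mul_of_nonneg_left hstep h4α
    _ = 8 * (4 ^ α * 2 ^ α) * W := by ring
    _ = 8 * 8 ^ α * W := by
        rw [← Real.mul_rpow (by norm_num) (by norm_num)]
        norm_num

lemma V_neg (p : ℝ) {k : ℕ} (w : EuclideanSpace ℝ (Fin k)) : V p (-w) = -V p w := by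
  simp [V]

theorem stmt_7 {k : ℕ} (p : ℝ) (hp : 2 ≤ p) :
    ∃ c : ℝ, 0 < c ∧ ∀ z η : EuclideanSpace ℝ (Fin k),
      ‖V p (z - η)‖ ≤ c * ‖V p z - V p η‖ := by
  refine ⟨8 * 8 ^ ((p - 2) / 4), by positivity, fun z η => ?_⟩
  have hα : 0 ≤ (p - 2) / 4 := by linarith
  rcases le_total ‖η‖ ‖z‖ with h | h
  · exact key_ineq ((p - 2) / 4) hα z η h
  · have h1 : V p (z - η) = -V p (η - z) := by
      rw [show z - η = -(η - z) from (neg_sub η z).symm, V_neg]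
    have h2 : ‖V p z - V p η‖ = ‖V p η - V p z‖ := norm_sub_rev _ _
    rw [h1, norm_neg, h2]
    exact key_ineq ((p - 2) / 4) hα η z h
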